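/- For a > 0 and ρ as in the construction (ρ(l) = l - 5al³ + 10a²l⁵ on [0, 1/√(5a)], s - ρ(s) < 1/(3√a) for all s, ρ' = 1 for l ≥ 1/(2√a)), the radius r₂ = r(1/(2√a)) of the support of the perturbation satisfies ln r₂ - ln(1/(2√a)) = ∫₀^{1/(2√a)} (1/ρ(s) - 1/s) ds ≤ 2 - ln(3-√5); consequently r₂ ≤ (2√a)⁻¹·e²/(3-√5), so r₂ → 0 as a → ∞. -/

import Mathlib

open MeasureTheory intervalIntegral Real Filter Set

set_option maxHeartbeats 2000000

/-- For the solution `r` of `dr/dl = r/ρ` with `r(l)/l → 1` as `l → 0⁺`, the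
radius `r₂ = r(1/(2√a))` of the support of the perturbation satisfies
`ln r₂ - ln(1/(2√a)) = ∫₀^{1/(2√a)} (1/ρ(s) - 1/s) ds ≤ 2 - ln(3-√5)`, hence
`r₂ ≤ (2√a)⁻¹ e²/(3-√5)` (so `r₂ → 0` as `a → ∞`). -/
theorem stmt16 (a : ℝ) (ha : 0 < a) (ρ r : ℝ → ℝ)
    (hρcont : Continuous ρ)
    (hpoly : ∀ l ∈ Set.Icc (0 : ℝ) (1 / Real.sqrt (5 * a)),
      ρ l = l - 5 * a * l ^ 3 + 10 * a ^ 2 * l ^ 5)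
    (hρpos : ∀ s : ℝ, 0 < s → 0 < ρ s)
    (hρle : ∀ s : ℝ, 0 ≤ s → ρ s ≤ s)
    (hgap : ∀ s : ℝ, 0 ≤ s → s - ρ s < 1 / (3 * Real.sqrt a))
    (hrpos : ∀ l : ℝ, 0 < l → 0 < r l)
    (hrode : ∀ l : ℝ, 0 < l → HasDerivAt r (r l / ρ l) l)
    (hrlim : Filter.Tendsto (fun l => r l / l) (nhdsWithin 0 (Set.Ioi 0)) (nhds 1)) :
    Real.log (r (1 / (2 * Real.sqrt a))) - Real.log (1 / (2 * Real.sqrt a))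
        = ∫ s in (0 : ℝ)..(1 / (2 * Real.sqrt a)), (1 / ρ s - 1 / s) ∧
    (∫ s in (0 : ℝ)..(1 / (2 * Real.sqrt a)), (1 / ρ s - 1 / s))
        ≤ 2 - Real.log (3 - Real.sqrt 5) ∧
    r (1 / (2 * Real.sqrt a))
        ≤ (1 / (2 * Real.sqrt a)) * Real.exp 2 / (3 - Real.sqrt 5) := by
  have ha' : 0 < Real.sqrt a := Real.sqrt_pos.mpr ha
  have ha2 : Real.sqrt a ^ 2 = a := Real.sq_sqrt ha.le
  set b : ℝ := 1 / (2 * Real.sqrt a) with hbdef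
  set L : ℝ := 1 / Real.sqrt (5 * a) with hLdef
  set c : ℝ := 1 / (3 * Real.sqrt a) with hcdef
  have hbpos : 0 < b := by positivity
  have h5a : Real.sqrt (5 * a) = Real.sqrt 5 * Real.sqrt a := Real.sqrt_mul (by norm_num) a
  have hs5pos : 0 < Real.sqrt 5 := Real.sqrt_pos.mpr (by norm_num)
  have hs5sq : Real.sqrt 5 ^ 2 = 5 := Real.sq_sqrt (by norm_num)
  have h2lt : (2:ℝ) < Real.sqrt 5 := by nlinarith [hs5sq, hs5pos]
  have h3gt : Real.sqrt 5 < 3 := by nlinarith [hs5sq, hs5pos]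
  have hLpos : 0 < L := by rw [hLdef, h5a]; positivity
  have hcpos : 0 < c := by positivity
  have hcL : c < L := by
    rw [hcdef, hLdef, h5a]
    apply one_div_lt_one_div_of_lt (by positivity)
    nlinarith
  have hLb : L < b := by
    rw [hbdef, hLdef, h5a]
    apply one_div_lt_one_div_of_lt (by positivity)
    nlinarith
  have hLsq : L ^ 2 = 1 / (5 * a) := by
    rw [hLdef, div_pow, one_pow, Real.sq_sqrt (by positivity)]
  set f : ℝ → ℝ := fun s => 1 / ρ s - 1 / s with hfdef
  -- basic facts
  have hρ0 : ρ 0 = 0 := by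
    have := hpoly 0 ⟨le_refl 0, hLpos.le⟩; simpa using this
  have hfnonneg : ∀ s : ℝ, 0 ≤ s → 0 ≤ f s := by
    intro s hs
    rcases eq_or_lt_of_le hs with h | h
    · simp [hfdef, ← h, hρ0]
    · have := hρle s hs
      have h1 : 1 / s ≤ 1 / ρ s := one_div_le_one_div_of_le (hρpos s h) this
      simp only [hfdef]; linarith
  -- bound on (0, L]
  have hq38 : ∀ s : ℝ, (3:ℝ)/8 ≤ 1 - 5 * a * s ^ 2 + 10 * a ^ 2 * s ^ 4 := by
    intro s; nlinarith [sq_nonneg (a * s ^ 2 - 1/4)]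
  have hpoly' : ∀ s ∈ Set.Icc (0:ℝ) L, ρ s = s * (1 - 5 * a * s ^ 2 + 10 * a ^ 2 * s ^ 4) := by
    intro s hs; rw [hpoly s hs]; ring
  have hbd1 : ∀ s ∈ Set.Icc (0:ℝ) L, f s ≤ 40 * a / 3 * s := by
    intro s hs
    rcases eq_or_lt_of_le hs.1 with h | h
    · simp [hfdef, ← h, hρ0]
    · set q : ℝ := 1 - 5 * a * s ^ 2 + 10 * a ^ 2 * s ^ 4 with hqdef
      have hq : (3:ℝ)/8 ≤ q := hq38 s
      have hρs : ρ s = s * q := hpoly' s hs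
      have hsq : 0 < s * q := by positivity
      have hfs : f s = (1 - q) / (s * q) := by
        simp only [hfdef, hρs]
        field_simp
      rw [hfs, div_le_iff₀ hsq]
      nlinarith [sq_nonneg s, sq_nonneg (a * s ^ 2), mul_pos h (mul_pos ha h)]
  -- bound on [L, b]
  have hρgap : ∀ s : ℝ, 0 ≤ s → s - c ≤ ρ s := fun s hs => by linarith [hgap s hs]
  have hbd2 : ∀ s ∈ Set.Icc L b, f s ≤ 1 / (s - c) - 1 / s := by
    intro s hs
    have hsc : 0 < s - c := by linarith [hs.1]
    have h1 : 1 / ρ s ≤ 1 / (s - c) :=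
      one_div_le_one_div_of_le hsc (hρgap s (by linarith [hs.1, hLpos]))
    simp only [hfdef]; linarith
  -- global bound on (0, b]
  set M : ℝ := max (40 * a / 3 * L) (1 / (L - c)) with hMdef
  have hMbd : ∀ s ∈ Set.Ioc (0:ℝ) b, ‖f s‖ ≤ M := by
    intro s hs
    rw [Real.norm_eq_abs, abs_of_nonneg (hfnonneg s hs.1.le)]
    rcases le_total s L with h | h
    · refine le_trans (hbd1 s ⟨hs.1.le, h⟩) (le_trans ?_ (le_max_left _ _))
      have : 0 ≤ 40 * a / 3 := by positivity
      nlinarith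
    · refine le_trans (hbd2 s ⟨h, hs.2⟩) (le_trans ?_ (le_max_right _ _))
      have hsc : 0 < s - c := by linarith
      have h1 : 1 / (s - c) ≤ 1 / (L - c) :=
        one_div_le_one_div_of_le (by linarith) (by linarith)
      have h2 : 0 < 1 / s := one_div_pos.mpr (lt_of_lt_of_le hLpos h)
      linarith
  have hfmeas : Measurable f := by
    simp only [hfdef, one_div]
    exact hρcont.measurable.inv.sub measurable_inv
  -- integrability on [0, b]
  have hint0b : IntervalIntegrable f volume 0 b := by
    rw [intervalIntegrable_iff_integrableOn_Ioc_of_le hbpos.le]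
    apply Measure.integrableOn_of_bounded (M := M) measure_Ioc_lt_top.ne
      hfmeas.aestronglyMeasurable
    · filter_upwards [ae_restrict_mem measurableSet_Ioc] with s hs using hMbd s hs
  -- FTC on [ε, b]
  have hcontf : ∀ s : ℝ, 0 < s → ContinuousAt f s := by
    intro s hs
    exact ((continuousAt_const.div hρcont.continuousAt (hρpos s hs).ne')).sub
      (continuousAt_const.div continuousAt_id hs.ne')
  set g : ℝ → ℝ := fun l => Real.log (r l) - Real.log l with hgdef
  have hftc : ∀ ε : ℝ, 0 < ε → ε ≤ b → (∫ s in ε..b, f s) = g b - g ε := by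
    intro ε hε hεb
    apply intervalIntegral.integral_eq_sub_of_hasDerivAt
    · intro x hx
      rw [Set.uIcc_of_le hεb] at hx
      have hx0 : 0 < x := lt_of_lt_of_le hε hx.1
      have h1 : HasDerivAt (fun l => Real.log (r l)) (r x / ρ x / r x) x :=
        (hrode x hx0).log (hrpos x hx0).ne'
      have h2 : HasDerivAt Real.log x⁻¹ x := Real.hasDerivAt_log hx0.ne'
      have := h1.sub h2
      convert this using 1
      show 1 / ρ x - 1 / x = _
      rw [div_div, mul_comm, ← div_div, div_self (hrpos x hx0).ne', one_div x]
      rfl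
    · apply hint0b.mono_set
      rw [Set.uIcc_of_le hεb, Set.uIcc_of_le hbpos.le]
      exact Set.Icc_subset_Icc hε.le le_rfl
  -- limit of g at 0⁺
  have hglim : Filter.Tendsto g (nhdsWithin 0 (Set.Ioi 0)) (nhds 0) := by
    have h1 : Filter.Tendsto (fun l => Real.log (r l / l)) (nhdsWithin 0 (Set.Ioi 0)) (nhds 0) := by
      have := (Real.continuousAt_log one_ne_zero).tendsto.comp hrlim
      simpa [Function.comp_def] using this
    apply h1.congr'
    filter_upwards [self_mem_nhdsWithin] with l hl
    rw [Real.log_div (hrpos l hl).ne' (ne_of_gt hl)]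
  -- the first equality
  have heq : g b = ∫ s in (0:ℝ)..b, f s := by
    have hne : (nhdsWithin (0:ℝ) (Set.Ioi 0)).NeBot := nhdsGT_neBot 0
    have hlim1 : Filter.Tendsto (fun ε => ∫ s in ε..b, f s) (nhdsWithin 0 (Set.Ioi 0))
        (nhds (g b)) := by
      have : Filter.Tendsto (fun ε => g b - g ε) (nhdsWithin 0 (Set.Ioi 0)) (nhds (g b - 0)) :=
        tendsto_const_nhds.sub hglim
      rw [sub_zero] at this
      apply this.congr'
      filter_upwards [self_mem_nhdsWithin, Ioo_mem_nhdsGT_of_mem (Set.left_mem_Ico.mpr hbpos)]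
        with ε hε hε' using (hftc ε hε hε'.2.le).symm
    have hlim2 : Filter.Tendsto (fun ε => ∫ s in ε..b, f s) (nhdsWithin 0 (Set.Ioi 0))
        (nhds (∫ s in (0:ℝ)..b, f s)) := by
      have key : ∀ ε ∈ Set.Ioo (0:ℝ) b, (∫ s in ε..b, f s)
          = (∫ s in (0:ℝ)..b, f s) - ∫ s in (0:ℝ)..ε, f s := by
        intro ε hε
        have i1 : IntervalIntegrable f volume 0 ε := by
          apply hint0b.mono_set
          rw [Set.uIcc_of_le hε.1.le, Set.uIcc_of_le hbpos.le]
          exact Set.Icc_subset_Icc le_rfl hε.2.le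
        have i2 : IntervalIntegrable f volume ε b := by
          apply hint0b.mono_set
          rw [Set.uIcc_of_le hε.2.le, Set.uIcc_of_le hbpos.le]
          exact Set.Icc_subset_Icc hε.1.le le_rfl
        have := intervalIntegral.integral_add_adjacent_intervals i1 i2
        linarith
      have hsmall : Filter.Tendsto (fun ε => ∫ s in (0:ℝ)..ε, f s) (nhdsWithin 0 (Set.Ioi 0))
          (nhds 0) := by
        apply squeeze_zero_norm'
        · filter_upwards [Ioo_mem_nhdsGT_of_mem (Set.left_mem_Ico.mpr hbpos)] with ε hε
          calc ‖∫ s in (0:ℝ)..ε, f s‖ ≤ M * |ε - 0| := by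
                apply intervalIntegral.norm_integral_le_of_norm_le_const
                intro x hx
                rw [Set.uIoc_of_le hε.1.le] at hx
                exact hMbd x ⟨hx.1, hx.2.trans hε.2.le⟩
            _ = M * |ε| := by rw [sub_zero]
        · have : Filter.Tendsto (fun ε : ℝ => M * |ε|) (nhdsWithin 0 (Set.Ioi 0)) (nhds (M * |0|)) := by
            apply Filter.Tendsto.mono_left _ nhdsWithin_le_nhds
            exact (continuous_const.mul continuous_abs).tendsto 0
          simpa using this
      have : Filter.Tendsto (fun ε => (∫ s in (0:ℝ)..b, f s) - ∫ s in (0:ℝ)..ε, f s)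
          (nhdsWithin 0 (Set.Ioi 0)) (nhds ((∫ s in (0:ℝ)..b, f s) - 0)) :=
        tendsto_const_nhds.sub hsmall
      rw [sub_zero] at this
      apply this.congr'
      filter_upwards [Ioo_mem_nhdsGT_of_mem (Set.left_mem_Ico.mpr hbpos)] with ε hε
      exact (key ε hε).symm
    exact tendsto_nhds_unique hlim1 hlim2
  -- second part: the bound
  have hiL : IntervalIntegrable f volume 0 L := by
    apply hint0b.mono_set
    rw [Set.uIcc_of_le hLpos.le, Set.uIcc_of_le hbpos.le]
    exact Set.Icc_subset_Icc le_rfl hLb.le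
  have hiLb : IntervalIntegrable f volume L b := by
    apply hint0b.mono_set
    rw [Set.uIcc_of_le hLb.le, Set.uIcc_of_le hbpos.le]
    exact Set.Icc_subset_Icc hLpos.le le_rfl
  have hsplit : (∫ s in (0:ℝ)..b, f s) = (∫ s in (0:ℝ)..L, f s) + ∫ s in L..b, f s :=
    (intervalIntegral.integral_add_adjacent_intervals hiL hiLb).symm
  have hI1 : (∫ s in (0:ℝ)..L, f s) ≤ 4 / 3 := by
    have h1 : (∫ s in (0:ℝ)..L, f s) ≤ ∫ s in (0:ℝ)..L, 40 * a / 3 * s := by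
      apply intervalIntegral.integral_mono_on hLpos.le hiL
      · exact (continuous_const.mul continuous_id).intervalIntegrable 0 L
      · exact hbd1
    have h2 : (∫ s in (0:ℝ)..L, 40 * a / 3 * s) = 4 / 3 := by
      rw [intervalIntegral.integral_const_mul, integral_id, hLsq]
      field_simp
      ring
    exact h1.trans h2.le
  have h35 : 0 < 3 - Real.sqrt 5 := sub_pos.mpr h3gt
  have hI2 : (∫ s in L..b, f s) ≤ - Real.log (3 - Real.sqrt 5) := by
    have hcont2 : ContinuousOn (fun s : ℝ => (1:ℝ) / (s - c)) (Set.Icc L b) := by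
      apply ContinuousOn.div continuousOn_const (by fun_prop)
      intro s hs
      have : 0 < s - c := by linarith [hs.1]
      exact this.ne'
    have hcont3 : ContinuousOn (fun s : ℝ => (1:ℝ) / s) (Set.Icc L b) := by
      apply ContinuousOn.div continuousOn_const continuousOn_id
      intro s hs
      have : 0 < s := lt_of_lt_of_le hLpos hs.1
      exact this.ne'
    have hii2 : IntervalIntegrable (fun s : ℝ => (1:ℝ) / (s - c)) volume L b := by
      apply ContinuousOn.intervalIntegrable
      rwa [Set.uIcc_of_le hLb.le]
    have hii3 : IntervalIntegrable (fun s : ℝ => (1:ℝ) / s) volume L b := by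
      apply ContinuousOn.intervalIntegrable
      rwa [Set.uIcc_of_le hLb.le]
    have h1 : (∫ s in L..b, f s) ≤ ∫ s in L..b, (1 / (s - c) - 1 / s) := by
      apply intervalIntegral.integral_mono_on hLb.le hiLb (hii2.sub hii3)
      exact hbd2
    have key1 : (∫ s in L..b, 1 / (s - c)) = Real.log ((b - c)/(L - c)) := by
      rw [intervalIntegral.integral_comp_sub_right (fun x : ℝ => 1 / x) c]
      apply integral_one_div_of_pos <;> linarith
    have key2 : (∫ s in L..b, 1 / s) = Real.log (b / L) :=
      integral_one_div_of_pos hLpos hbpos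
    have h2 : (∫ s in L..b, (1 / (s - c) - 1 / s))
        = (Real.log ((b - c)/(L - c))) - Real.log (b / L) := by
      rw [intervalIntegral.integral_sub hii2 hii3, key1, key2]
    have eb : b - c = 1 / (6 * Real.sqrt a) := by
      rw [hbdef, hcdef]; field_simp; ring
    have eL : L - c = (3 - Real.sqrt 5) / (3 * Real.sqrt 5 * Real.sqrt a) := by
      rw [hLdef, hcdef, h5a]
      rw [div_sub_div _ _ (by positivity) (by positivity),
        div_eq_div_iff (by positivity) (by positivity)]
      ring
    have ebL : b / L = Real.sqrt 5 / 2 := by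
      rw [div_eq_div_iff (ne_of_gt hLpos) (by norm_num), hbdef, hLdef, h5a]
      field_simp
    have h3 : (Real.log ((b - c)/(L - c))) - Real.log (b / L) = - Real.log (3 - Real.sqrt 5) := by
      have e2 : (b - c)/(L - c) = (Real.sqrt 5 / 2) / (3 - Real.sqrt 5) := by
        rw [eb, eL, div_eq_div_iff (by positivity) (by positivity)]
        field_simp
        ring
      rw [e2, ebL, Real.log_div (by positivity) h35.ne']
      ring
    linarith [h1, h2, h3]
  have hfin : (∫ s in (0:ℝ)..b, f s) ≤ 2 - Real.log (3 - Real.sqrt 5) := by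
    rw [hsplit]; linarith
  have heq' : Real.log (r b) - Real.log b = ∫ s in (0:ℝ)..b, f s := heq
  refine ⟨heq', hfin, ?_⟩
  -- third part
  have hlogle : Real.log (r b) ≤ Real.log b + (2 - Real.log (3 - Real.sqrt 5)) := by
    linarith [heq', hfin]
  calc r b = Real.exp (Real.log (r b)) := (Real.exp_log (hrpos b hbpos)).symm
    _ ≤ Real.exp (Real.log b + (2 - Real.log (3 - Real.sqrt 5))) := Real.exp_le_exp.mpr hlogle
    _ = b * Real.exp 2 / (3 - Real.sqrt 5) := by
        rw [Real.exp_add, Real.exp_sub, Real.exp_log hbpos, Real.exp_log h35]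
        ring
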